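/- arXiv:1610.03186 — 2 statements merged into one kernel-verified Lean document; each statement's English description precedes it below -/
import Mathlib

section
/- Weighted strong (p,p) Fefferman–Stein inequality: for 1 < p < ∞ there is a constant C = C(n,p) such that for every weight w on ℝ^n and every f, ∫_{ℝ^n} (M_Q f)^p w dx ≤ C ∫_{ℝ^n} |f|^p M_Q w dx. -/
open MeasureTheory Set
open scoped ENNReal

noncomputable section

/-- A cube in `ℝⁿ` with sides parallel to the axes. -/
def IsCube (n : ℕ) (Q : Set (Fin n → ℝ)) : Prop :=
  ∃ (a : Fin n → ℝ) (r : ℝ), 0 < r ∧ Q = Set.univ.pi fun i => Set.Ioo (a i) (a i + r)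

/-- The Hardy–Littlewood maximal operator over cubes in `ℝⁿ`. -/
def MHL {n : ℕ} (f : (Fin n → ℝ) → ℝ) (x : Fin n → ℝ) : ℝ≥0∞ :=
  ⨆ (Q : Set (Fin n → ℝ)) (_ : IsCube n Q ∧ x ∈ Q),
    (∫⁻ y in Q, ENNReal.ofReal |f y|) / volume Q

open Metric

variable {n : ℕ}

lemma ball_eq_pi (c : Fin n → ℝ) {r : ℝ} (hr : 0 < r) :
    ball c r = Set.univ.pi fun i => Set.Ioo (c i - r) (c i + r) := by
  rw [ball_pi _ hr]
  exact Set.pi_congr rfl fun i _ => Real.ball_eq_Ioo (c i) r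

lemma isCube_ball (c : Fin n → ℝ) {r : ℝ} (hr : 0 < r) : IsCube n (ball c r) := by
  refine ⟨fun i => c i - r, 2 * r, by linarith, ?_⟩
  rw [ball_eq_pi c hr]
  exact Set.pi_congr rfl fun i _ => by congr 1 <;> ring

lemma IsCube.eq_ball {Q : Set (Fin n → ℝ)} (h : IsCube n Q) :
    ∃ (c : Fin n → ℝ) (r : ℝ), 0 < r ∧ Q = ball c r := by
  obtain ⟨a, r, hr, rfl⟩ := h
  refine ⟨fun i => a i + r / 2, r / 2, by linarith, ?_⟩
  rw [ball_eq_pi _ (by linarith : (0:ℝ) < r / 2)]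
  exact Set.pi_congr rfl fun i _ => by congr 1 <;> ring

lemma volume_ball_pi (c : Fin n → ℝ) {r : ℝ} (hr : 0 < r) :
    volume (ball c r) = (ENNReal.ofReal (2 * r)) ^ n := by
  rw [ball_eq_pi c hr, volume_pi_pi]
  have : ∀ x : Fin n, c x + r - (c x - r) = 2 * r := fun x => by ring
  simp [this, Finset.prod_const]

lemma volume_ball_ne_zero (c : Fin n → ℝ) {r : ℝ} (hr : 0 < r) : volume (ball c r) ≠ 0 := by
  rw [volume_ball_pi c hr]
  positivity

lemma volume_ball_ne_top (c : Fin n → ℝ) {r : ℝ} (hr : 0 < r) : volume (ball c r) ≠ ∞ := by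
  rw [volume_ball_pi c hr]
  exact ENNReal.pow_ne_top ENNReal.ofReal_ne_top

lemma volume_ball_six (c : Fin n → ℝ) {r : ℝ} (hr : 0 < r) :
    volume (ball c (6 * r)) = 6 ^ n * volume (ball c r) := by
  rw [volume_ball_pi c hr, volume_ball_pi c (by linarith : (0:ℝ) < 6 * r), ← mul_pow]
  congr 1
  rw [show 2 * (6 * r) = 6 * (2 * r) by ring, ENNReal.ofReal_mul (by norm_num)]
  norm_num

lemma avg_le_MHL (f : (Fin n → ℝ) → ℝ) {x c : Fin n → ℝ} {r : ℝ} (hr : 0 < r)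
    (hx : x ∈ ball c r) :
    (∫⁻ y in ball c r, ENNReal.ofReal |f y|) / volume (ball c r) ≤ MHL f x :=
  le_iSup₂ (f := fun (Q : Set (Fin n → ℝ)) (_ : IsCube n Q ∧ x ∈ Q) =>
    (∫⁻ y in Q, ENNReal.ofReal |f y|) / volume Q) (ball c r) ⟨isCube_ball c hr, hx⟩

lemma exists_ball_of_lt_MHL {f : (Fin n → ℝ) → ℝ} {x : Fin n → ℝ} {l : ℝ≥0∞}
    (h : l < MHL f x) :
    ∃ (c : Fin n → ℝ) (r : ℝ), 0 < r ∧ x ∈ ball c r ∧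
      l * volume (ball c r) < ∫⁻ y in ball c r, ENNReal.ofReal |f y| := by
  rw [MHL, lt_iSup_iff] at h
  obtain ⟨Q, hQ⟩ := h
  rw [lt_iSup_iff] at hQ
  obtain ⟨⟨hQc, hxQ⟩, hlt⟩ := hQ
  obtain ⟨c, r, hr, rfl⟩ := hQc.eq_ball
  refine ⟨c, r, hr, hxQ, ?_⟩
  rwa [ENNReal.lt_div_iff_mul_lt (Or.inl (volume_ball_ne_zero c hr))
    (Or.inl (volume_ball_ne_top c hr))] at hlt

lemma isOpen_MHL_gt (f : (Fin n → ℝ) → ℝ) (l : ℝ≥0∞) : IsOpen {x | l < MHL f x} := by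
  rw [isOpen_iff_forall_mem_open]
  intro x hx
  obtain ⟨c, r, hr, hxc, hlt⟩ := exists_ball_of_lt_MHL hx
  refine ⟨ball c r, fun y hy => ?_, isOpen_ball, hxc⟩
  have := avg_le_MHL f hr hy
  refine lt_of_lt_of_le ?_ this
  rwa [ENNReal.lt_div_iff_mul_lt (Or.inl (volume_ball_ne_zero c hr))
    (Or.inl (volume_ball_ne_top c hr))]

lemma measurable_MHL (f : (Fin n → ℝ) → ℝ) : Measurable (MHL f) := by
  have : LowerSemicontinuous (MHL f) := by
    intro x t ht
    have := isOpen_MHL_gt f t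
    exact this.mem_nhds ht
  exact this.measurable

lemma per_ball {g w : (Fin n → ℝ) → ℝ} {c : Fin n → ℝ} {r : ℝ} {l : ℝ≥0∞}
    (hr : 0 < r) (hl : l ≠ 0)
    (hlt : l * volume (ball c r) ≤ ∫⁻ y in ball c r, ENNReal.ofReal |g y|) :
    l * ∫⁻ y in closedBall c (5 * r), ENNReal.ofReal |w y| ≤
      6 ^ n * ∫⁻ y in ball c r, ENNReal.ofReal |g y| * MHL w y := by
  set V := volume (ball c r) with hV
  have hV0 : V ≠ 0 := volume_ball_ne_zero c hr
  have hVt : V ≠ ∞ := volume_ball_ne_top c hr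
  set W := ∫⁻ y in closedBall c (5 * r), ENNReal.ofReal |w y| with hW
  set I := ∫⁻ y in ball c r, ENNReal.ofReal |g y| * MHL w y with hI
  -- pointwise bound on the ball
  have key : ∀ y ∈ ball c r, W ≤ MHL w y * (6 ^ n * V) := by
    intro y hy
    have h2 : (∫⁻ z in ball c (6 * r), ENNReal.ofReal |w z|) / volume (ball c (6 * r)) ≤
        MHL w y := avg_le_MHL w (show (0:ℝ) < 6 * r by linarith)
          (ball_subset_ball (by linarith : r ≤ 6 * r) hy)
    have h1 : W ≤ ∫⁻ z in ball c (6 * r), ENNReal.ofReal |w z| :=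
      lintegral_mono_set (closedBall_subset_ball (by linarith))
    have h3 := (ENNReal.div_le_iff_le_mul
      (Or.inl (volume_ball_ne_zero c (by linarith : (0:ℝ) < 6 * r)))
      (Or.inl (volume_ball_ne_top c (by linarith : (0:ℝ) < 6 * r)))).1 h2
    calc W ≤ ∫⁻ z in ball c (6 * r), ENNReal.ofReal |w z| := h1
    _ ≤ MHL w y * volume (ball c (6 * r)) := h3
    _ = MHL w y * (6 ^ n * V) := by rw [volume_ball_six c hr]
  have aux : ∀ W' : ℝ≥0∞, W' ≠ ∞ → W' ≤ W → l * W' ≤ 6 ^ n * I := by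
    intro W' hW't hW'le
    have step : ∫⁻ y in ball c r, ENNReal.ofReal |g y| * W' ≤
        ∫⁻ y in ball c r, (ENNReal.ofReal |g y| * MHL w y) * (6 ^ n * V) := by
      refine setLIntegral_mono' measurableSet_ball fun y hy => ?_
      rw [mul_assoc]
      exact mul_le_mul_right (le_trans hW'le (key y hy)) _
    rw [lintegral_mul_const' W' _ hW't] at step
    rw [lintegral_mul_const' (6 ^ n * V) _
      (ENNReal.mul_ne_top (by simp) hVt)] at step
    have l1 : (l * W') * V ≤ (6 ^ n * I) * V := by
      calc (l * W') * V = (l * V) * W' := by ring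
      _ ≤ (∫⁻ y in ball c r, ENNReal.ofReal |g y|) * W' := mul_le_mul_left hlt _
      _ ≤ I * (6 ^ n * V) := step
      _ = (6 ^ n * I) * V := by ring
    exact (ENNReal.mul_le_mul_iff_left hV0 hVt).1 l1
  by_cases hWt : W = ∞
  · -- show RHS is infinite
    have hnat : ∀ m : ℕ, l * m ≤ 6 ^ n * I := fun m =>
      aux m (ENNReal.natCast_ne_top m) (hWt ▸ le_top)
    have : (∞ : ℝ≥0∞) ≤ 6 ^ n * I := by
      have : l * ∞ ≤ 6 ^ n * I := by
        rw [← ENNReal.iSup_natCast, ENNReal.mul_iSup]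
        exact iSup_le hnat
      rwa [ENNReal.mul_top hl] at this
    exact le_trans le_top this
  · exact aux W hWt le_rfl

/-- Level-type set witnessed by balls of radius at most `R`. -/
def Elev (l : ℝ≥0∞) (h : (Fin n → ℝ) → ℝ) (R : ℝ) : Set (Fin n → ℝ) :=
  {x | ∃ (c : Fin n → ℝ) (r : ℝ), 0 < r ∧ r ≤ R ∧ x ∈ ball c r ∧
    l * volume (ball c r) < ∫⁻ y in ball c r, ENNReal.ofReal |h y|}

lemma isOpen_Elev (l : ℝ≥0∞) (h : (Fin n → ℝ) → ℝ) (R : ℝ) : IsOpen (Elev l h R) := by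
  rw [isOpen_iff_forall_mem_open]
  rintro x ⟨c, r, hr, hrR, hx, hlt⟩
  exact ⟨ball c r, fun y hy => ⟨c, r, hr, hrR, hy, hlt⟩, isOpen_ball, hx⟩

lemma weak_R (l : ℝ≥0∞) (hl : l ≠ 0) (h w : (Fin n → ℝ) → ℝ) (R : ℝ) :
    l * ∫⁻ x in Elev l h R, ENNReal.ofReal |w x| ≤
      6 ^ n * ∫⁻ x, ENNReal.ofReal |h x| * MHL w x := by
  set νw := volume.withDensity (fun y : Fin n → ℝ => ENNReal.ofReal |w y|) with hνw
  set νg := volume.withDensity (fun y : Fin n → ℝ => ENNReal.ofReal |h y| * MHL w y) with hνg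
  set t : Set ((Fin n → ℝ) × ℝ) := {b | 0 < b.2 ∧ b.2 ≤ R ∧
    l * volume (ball b.1 b.2) < ∫⁻ y in ball b.1 b.2, ENNReal.ofReal |h y|} with ht
  obtain ⟨u, hut, hdisj, hcov⟩ :=
    Vitali.exists_disjoint_subfamily_covering_enlargement_closedBall t Prod.fst Prod.snd R
      (fun a ha => ha.2.1) 5 (by norm_num)
  have hdisj' : u.PairwiseDisjoint fun b : (Fin n → ℝ) × ℝ => ball b.1 b.2 :=
    hdisj.mono fun b => ball_subset_closedBall
  have ucount : u.Countable := by
    refine hdisj'.countable_of_isOpen (fun b _ => isOpen_ball) fun b hb => ?_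
    exact nonempty_ball.2 (hut hb).1
  have hcover : Elev l h R ⊆ ⋃ b ∈ u, closedBall b.1 (5 * b.2) := by
    rintro x ⟨c, r, hr, hrR, hx, hlt⟩
    obtain ⟨b, hb, hsub⟩ := hcov (c, r) ⟨hr, hrR, hlt⟩
    exact mem_biUnion hb (hsub (ball_subset_closedBall hx))
  have step1 : ∫⁻ x in Elev l h R, ENNReal.ofReal |w x| ≤
      ∑' b : u, νw (closedBall b.1.1 (5 * b.1.2)) := by
    rw [← withDensity_apply _ (isOpen_Elev l h R).measurableSet]
    exact le_trans (measure_mono hcover) (measure_biUnion_le νw ucount _)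
  have step2 : ∀ b ∈ u, l * νw (closedBall b.1 (5 * b.2)) ≤ 6 ^ n * νg (ball b.1 b.2) := by
    intro b hb
    obtain ⟨hbr, _, hblt⟩ := hut hb
    rw [hνw, hνg, withDensity_apply _ measurableSet_closedBall,
      withDensity_apply _ measurableSet_ball]
    exact per_ball hbr hl hblt.le
  have step3 : ∑' b : u, νg (ball b.1.1 b.1.2) ≤ νg univ := by
    rw [← measure_biUnion ucount hdisj' fun b _ => measurableSet_ball]
    exact measure_mono (subset_univ _)
  calc l * ∫⁻ x in Elev l h R, ENNReal.ofReal |w x|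
      ≤ l * ∑' b : u, νw (closedBall b.1.1 (5 * b.1.2)) := mul_le_mul_right step1 _
    _ = ∑' b : u, l * νw (closedBall b.1.1 (5 * b.1.2)) := ENNReal.tsum_mul_left.symm
    _ ≤ ∑' b : u, 6 ^ n * νg (ball b.1.1 b.1.2) :=
        ENNReal.tsum_le_tsum fun b => step2 b.1 b.2
    _ = 6 ^ n * ∑' b : u, νg (ball b.1.1 b.1.2) := ENNReal.tsum_mul_left
    _ ≤ 6 ^ n * νg univ := mul_le_mul_right step3 _
    _ = 6 ^ n * ∫⁻ x, ENNReal.ofReal |h x| * MHL w x := by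
        rw [hνg, withDensity_apply _ MeasurableSet.univ, Measure.restrict_univ]

lemma weak (l : ℝ≥0∞) (hl : l ≠ 0) (h w : (Fin n → ℝ) → ℝ) :
    l * ∫⁻ x in {x | l < MHL h x}, ENNReal.ofReal |w x| ≤
      6 ^ n * ∫⁻ x, ENNReal.ofReal |h x| * MHL w x := by
  set νw := volume.withDensity (fun y : Fin n → ℝ => ENNReal.ofReal |w y|) with hνw
  have hsub : {x | l < MHL h x} ⊆ ⋃ m : ℕ, Elev l h (m + 1) := by
    intro x hx
    obtain ⟨c, r, hr, hx', hlt⟩ := exists_ball_of_lt_MHL hx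
    obtain ⟨m, hm⟩ := exists_nat_ge r
    exact mem_iUnion.2 ⟨m, c, r, hr, by linarith, hx', hlt⟩
  have hmono : Monotone fun m : ℕ => Elev l h (m + 1) := by
    intro a b hab x ⟨c, r, hr, hrR, hx, hlt⟩
    exact ⟨c, r, hr, le_trans hrR (by exact_mod_cast add_le_add_left (Nat.cast_le.2 hab) 1),
      hx, hlt⟩
  have cont : νw {x | l < MHL h x} ≤ ⨆ m : ℕ, νw (Elev l h (m + 1)) := by
    calc νw {x | l < MHL h x} ≤ νw (⋃ m : ℕ, Elev l h (m + 1)) := measure_mono hsub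
    _ = ⨆ m : ℕ, νw (Elev l h (m + 1)) := by
        exact hmono.measure_iUnion
  rw [← withDensity_apply _ (isOpen_MHL_gt h l).measurableSet]
  calc l * νw {x | l < MHL h x} ≤ l * ⨆ m : ℕ, νw (Elev l h (m + 1)) :=
      mul_le_mul_right cont _
    _ = ⨆ m : ℕ, l * νw (Elev l h (m + 1)) := ENNReal.mul_iSup _ _
    _ ≤ 6 ^ n * ∫⁻ x, ENNReal.ofReal |h x| * MHL w x := by
        refine iSup_le fun m => ?_
        rw [hνw, withDensity_apply _ (isOpen_Elev l h _).measurableSet]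
        exact weak_R l hl h w _

lemma MHL_le_trunc (f : (Fin n → ℝ) → ℝ) {t : ℝ} (ht : 0 < t) (x : Fin n → ℝ) :
    MHL f x ≤ MHL (fun y => if t < |f y| then f y else 0) x + ENNReal.ofReal t := by
  set g := fun y => if t < |f y| then f y else 0 with hg
  refine iSup₂_le fun Q hQ => ?_
  obtain ⟨hQc, hxQ⟩ := hQ
  obtain ⟨c, r, hr, rfl⟩ := hQc.eq_ball
  set V := volume (ball c r) with hV
  have hV0 : V ≠ 0 := volume_ball_ne_zero c hr
  have hVt : V ≠ ∞ := volume_ball_ne_top c hr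
  have hpt : ∀ y, ENNReal.ofReal |f y| ≤ ENNReal.ofReal |g y| + ENNReal.ofReal t := by
    intro y
    by_cases hy : t < |f y|
    · have : g y = f y := by rw [hg]; simp [hy]
      rw [this]; exact le_self_add
    · push_neg at hy
      calc ENNReal.ofReal |f y| ≤ ENNReal.ofReal t := ENNReal.ofReal_le_ofReal hy
      _ ≤ _ := le_add_self
  have h1 : (∫⁻ y in ball c r, ENNReal.ofReal |f y|) ≤
      (∫⁻ y in ball c r, ENNReal.ofReal |g y|) + ENNReal.ofReal t * V := by
    calc (∫⁻ y in ball c r, ENNReal.ofReal |f y|)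
        ≤ ∫⁻ y in ball c r, (ENNReal.ofReal |g y| + ENNReal.ofReal t) :=
          lintegral_mono fun y => hpt y
      _ = _ := by rw [lintegral_add_right _ measurable_const, setLIntegral_const]
  calc (∫⁻ y in ball c r, ENNReal.ofReal |f y|) / V
      ≤ ((∫⁻ y in ball c r, ENNReal.ofReal |g y|) + ENNReal.ofReal t * V) / V :=
        ENNReal.div_le_div_right h1 _
    _ = (∫⁻ y in ball c r, ENNReal.ofReal |g y|) / V + ENNReal.ofReal t * V / V := by
        rw [ENNReal.add_div]
    _ ≤ MHL g x + ENNReal.ofReal t := by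
        refine add_le_add (avg_le_MHL g hr hxQ) ?_
        rw [mul_div_assoc, ENNReal.div_self hV0 hVt, mul_one]

lemma ofReal_two_rpow (y : ℝ) : ENNReal.ofReal ((2:ℝ) ^ y) = (2:ℝ≥0∞) ^ y := by
  rw [← ENNReal.ofReal_rpow_of_pos two_pos, ENNReal.ofReal_ofNat]

lemma two_rpow_ne_top (y : ℝ) : (2:ℝ≥0∞) ^ y ≠ ∞ := by
  rw [← ofReal_two_rpow]; exact ENNReal.ofReal_ne_top

lemma two_rpow_ne_zero (y : ℝ) : (2:ℝ≥0∞) ^ y ≠ 0 := by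
  rw [← ofReal_two_rpow]
  simp only [ne_eq, ENNReal.ofReal_eq_zero, not_le]
  positivity

lemma exists_dyadic {a : ℝ≥0∞} (ha : a ≠ 0) (hat : a ≠ ∞) :
    ∃ K : ℤ, (2:ℝ≥0∞) ^ ((K:ℝ) - 1) < a ∧ a ≤ (2:ℝ≥0∞) ^ ((K:ℝ)) := by
  have hb : 0 < a.toReal := ENNReal.toReal_pos ha hat
  set b := a.toReal with hbdef
  set K := ⌈Real.logb 2 b⌉ with hK
  have h1 : (K:ℝ) - 1 < Real.logb 2 b := by
    have := Int.ceil_lt_add_one (Real.logb 2 b); rw [← hK] at this; linarith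
  have h2 : Real.logb 2 b ≤ K := Int.le_ceil _
  have e1 : (2:ℝ) ^ Real.logb 2 b = b := Real.rpow_logb (by norm_num) (by norm_num) hb
  have hlt : (2:ℝ) ^ ((K:ℝ) - 1) < b := by
    rw [← e1]; exact (Real.rpow_lt_rpow_left_iff (by norm_num)).2 h1
  have hle : b ≤ (2:ℝ) ^ (K:ℝ) := by
    rw [← e1]; exact (Real.rpow_le_rpow_left_iff (by norm_num)).2 h2
  have ha' : a = ENNReal.ofReal b := (ENNReal.ofReal_toReal hat).symm
  refine ⟨K, ?_, ?_⟩
  · rw [← ofReal_two_rpow, ha']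
    exact (ENNReal.ofReal_lt_ofReal_iff hb).2 hlt
  · rw [← ofReal_two_rpow, ha']
    exact ENNReal.ofReal_le_ofReal hle

lemma dyadic_sum {q : ℝ} (hq : 0 < q) (K : ℤ) :
    (∑' k : ℤ, if k ≤ K then (2:ℝ≥0∞) ^ ((k:ℝ) * q) else 0) ≤
      (2:ℝ≥0∞) ^ ((K:ℝ) * q) * (1 - (2:ℝ≥0∞) ^ (-q))⁻¹ := by
  set F : ℤ → ℝ≥0∞ := fun k => if k ≤ K then (2:ℝ≥0∞) ^ ((k:ℝ) * q) else 0 with hF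
  have hinj : Function.Injective (fun m : ℕ => K - (m:ℤ)) := fun a b h => by
    simpa using h
  have hsupp : Function.support F ⊆ Set.range (fun m : ℕ => K - (m:ℤ)) := by
    intro k hk
    have hkK : k ≤ K := by
      by_contra h
      exact hk (by rw [hF]; simp [h])
    exact ⟨(K - k).toNat, by show K - ((K - k).toNat : ℤ) = k; omega⟩
  rw [← hinj.tsum_eq hsupp]
  have hterm : ∀ m : ℕ, F (K - (m:ℤ)) = (2:ℝ≥0∞) ^ ((K:ℝ) * q) * ((2:ℝ≥0∞) ^ (-q)) ^ m := by
    intro m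
    have h1 : (((K - (m:ℤ)) : ℤ) : ℝ) * q = (K:ℝ) * q + (-q) * (m:ℕ) := by push_cast; ring
    rw [hF]
    simp only [sub_le_self_iff, Int.natCast_nonneg, if_pos]
    rw [h1, ENNReal.rpow_add _ _ (by norm_num) (by norm_num)]
    congr 1
    rw [← ENNReal.rpow_natCast ((2:ℝ≥0∞) ^ (-q)) m, ← ENNReal.rpow_mul]
  rw [tsum_congr hterm, ENNReal.tsum_mul_left, ENNReal.tsum_geometric]

lemma rpow_le_rpow_exp {y z : ℝ} (h : y ≤ z) : (2:ℝ≥0∞) ^ y ≤ (2:ℝ≥0∞) ^ z :=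
  ENNReal.rpow_le_rpow_of_exponent_le (by norm_num) h

lemma pointwise_sum {p : ℝ} (hp : 1 < p) {a : ℝ≥0∞} (hat : a ≠ ∞) :
    (∑' k : ℤ, if (2:ℝ≥0∞) ^ ((k:ℝ) - 1) < a then (2:ℝ≥0∞) ^ ((k:ℝ) * (p - 1)) else 0) ≤
      ((2:ℝ≥0∞) ^ (p - 1) * (1 - (2:ℝ≥0∞) ^ (-(p - 1)))⁻¹) * a ^ (p - 1) := by
  by_cases ha : a = 0
  · have : ∀ k : ℤ, (if (2:ℝ≥0∞) ^ ((k:ℝ) - 1) < a then (2:ℝ≥0∞) ^ ((k:ℝ) * (p - 1)) else 0)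
        = 0 := by
      intro k
      rw [if_neg]
      rw [ha]
      exact not_lt_zero'
    rw [tsum_congr this]
    simp
  obtain ⟨K, hK1, hK2⟩ := exists_dyadic ha hat
  have hterm : ∀ k : ℤ,
      (if (2:ℝ≥0∞) ^ ((k:ℝ) - 1) < a then (2:ℝ≥0∞) ^ ((k:ℝ) * (p - 1)) else 0) ≤
        (if k ≤ K then (2:ℝ≥0∞) ^ ((k:ℝ) * (p - 1)) else 0) := by
    intro k
    by_cases hk : (2:ℝ≥0∞) ^ ((k:ℝ) - 1) < a
    · rw [if_pos hk, if_pos]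
      by_contra h
      push_neg at h
      have hKk : (K:ℝ) ≤ (k:ℝ) - 1 := by
        have h' : K + 1 ≤ k := h
        have h'' : ((K:ℝ)) + 1 ≤ (k:ℝ) := by exact_mod_cast h'
        linarith
      exact absurd (lt_of_le_of_lt (le_trans hK2 (rpow_le_rpow_exp hKk)) hk) (lt_irrefl _)
    · rw [if_neg hk]; exact zero_le
  refine le_trans (ENNReal.tsum_le_tsum hterm)
    (le_trans (dyadic_sum (by linarith : (0:ℝ) < p - 1) K) ?_)
  have h2K : (2:ℝ≥0∞) ^ ((K:ℝ)) ≤ 2 * a := by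
    calc (2:ℝ≥0∞) ^ ((K:ℝ)) = 2 * 2 ^ ((K:ℝ) - 1) := by
          nth_rewrite 1 [show (K:ℝ) = 1 + ((K:ℝ) - 1) by ring]
          rw [ENNReal.rpow_add _ _ (by norm_num) (by norm_num), ENNReal.rpow_one]
      _ ≤ 2 * a := mul_le_mul_right hK1.le _
  have hmain : (2:ℝ≥0∞) ^ ((K:ℝ) * (p - 1)) ≤ (2:ℝ≥0∞) ^ (p - 1) * a ^ (p - 1) := by
    calc (2:ℝ≥0∞) ^ ((K:ℝ) * (p - 1)) = ((2:ℝ≥0∞) ^ ((K:ℝ))) ^ (p - 1) := by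
          rw [← ENNReal.rpow_mul]
      _ ≤ (2 * a) ^ (p - 1) := ENNReal.rpow_le_rpow h2K (by linarith)
      _ = (2:ℝ≥0∞) ^ (p - 1) * a ^ (p - 1) := ENNReal.mul_rpow_of_nonneg _ _ (by linarith)
  calc (2:ℝ≥0∞) ^ ((K:ℝ) * (p - 1)) * (1 - (2:ℝ≥0∞) ^ (-(p - 1)))⁻¹
      ≤ ((2:ℝ≥0∞) ^ (p - 1) * a ^ (p - 1)) * (1 - (2:ℝ≥0∞) ^ (-(p - 1)))⁻¹ :=
        mul_le_mul_left hmain _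
    _ = ((2:ℝ≥0∞) ^ (p - 1) * (1 - (2:ℝ≥0∞) ^ (-(p - 1)))⁻¹) * a ^ (p - 1) := by ring

lemma iSup_two_rpow (p : ℝ) (hp : 1 ≤ p) : (⨆ k : ℤ, (2:ℝ≥0∞) ^ (((k:ℝ) + 1) * p)) = ∞ := by
  rw [iSup_eq_top]
  intro b hb
  obtain ⟨m, hm⟩ := ENNReal.exists_nat_gt hb.ne
  refine ⟨(m : ℤ), lt_of_lt_of_le hm ?_⟩
  calc (m : ℝ≥0∞) ≤ 2 ^ m := by exact_mod_cast (Nat.lt_two_pow_self (n := m)).le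
    _ = (2:ℝ≥0∞) ^ ((m:ℝ)) := (ENNReal.rpow_natCast 2 m).symm
    _ ≤ (2:ℝ≥0∞) ^ ((((m:ℤ):ℝ)) + 1) * 1 := by
        rw [mul_one]
        exact rpow_le_rpow_exp (by push_cast; linarith)
    _ ≤ (2:ℝ≥0∞) ^ (((((m:ℤ):ℝ)) + 1) * p) := by
        rw [mul_one]
        refine rpow_le_rpow_exp ?_
        have h0 : (0:ℝ) ≤ ((m:ℤ):ℝ) + 1 := by push_cast; linarith
        nlinarith

lemma pointwiseA {p : ℝ} (hp : 1 < p) (f w : (Fin n → ℝ) → ℝ) (x : Fin n → ℝ) :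
    MHL f x ^ p * ENNReal.ofReal (w x) ≤
      ∑' k : ℤ, ({y | (2:ℝ≥0∞) ^ ((k:ℝ)) < MHL f y}).indicator
        (fun y => ((2:ℝ≥0∞) ^ (((k:ℝ)) + 1)) ^ p * ENNReal.ofReal (w y)) x := by
  set F := MHL f x with hF
  set W := ENNReal.ofReal (w x) with hW
  set T : ℤ → ℝ≥0∞ := fun k => ({y | (2:ℝ≥0∞) ^ ((k:ℝ)) < MHL f y}).indicator
    (fun y => ((2:ℝ≥0∞) ^ (((k:ℝ)) + 1)) ^ p * ENNReal.ofReal (w y)) x with hT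
  by_cases hW0 : W = 0
  · by_cases hF0 : F = 0
    · rw [hF0, ENNReal.zero_rpow_of_pos (by linarith), zero_mul]; exact zero_le
    · rw [hW0, mul_zero]; exact zero_le
  by_cases hF0 : F = 0
  · rw [hF0, ENNReal.zero_rpow_of_pos (by linarith), zero_mul]; exact zero_le
  by_cases hFt : F = ∞
  · have hmem : ∀ k : ℤ, x ∈ {y | (2:ℝ≥0∞) ^ ((k:ℝ)) < MHL f y} := fun k => by
      show (2:ℝ≥0∞) ^ ((k:ℝ)) < MHL f x
      rw [← hF, hFt]
      exact (two_rpow_ne_top _).lt_top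
    have hTk : ∀ k : ℤ, T k = ((2:ℝ≥0∞) ^ (((k:ℝ)) + 1)) ^ p * W := fun k =>
      Set.indicator_of_mem (hmem k) _
    have htop : (⨆ k : ℤ, T k) = ∞ := by
      have : (⨆ k : ℤ, T k) = (⨆ k : ℤ, ((2:ℝ≥0∞) ^ (((k:ℝ)) + 1)) ^ p) * W := by
        rw [ENNReal.iSup_mul]
        exact iSup_congr hTk
      rw [this]
      have h1 : (⨆ k : ℤ, ((2:ℝ≥0∞) ^ (((k:ℝ)) + 1)) ^ p) = ∞ := by
        have := iSup_two_rpow p hp.le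
        rw [← this]
        refine iSup_congr fun k => ?_
        rw [← ENNReal.rpow_mul]
      rw [h1, ENNReal.top_mul hW0]
    refine le_trans ?_ (le_trans htop.ge (iSup_le fun k => ENNReal.le_tsum k))
    exact le_top
  · obtain ⟨K, hK1, hK2⟩ := exists_dyadic hF0 hFt
    have hmem : x ∈ {y | (2:ℝ≥0∞) ^ (((K - 1 : ℤ) : ℝ)) < MHL f y} := by
      show (2:ℝ≥0∞) ^ (((K - 1 : ℤ):ℝ)) < MHL f x
      rw [← hF]
      convert hK1 using 2
      push_cast
      ring
    have hTK : T (K - 1) = ((2:ℝ≥0∞) ^ ((((K - 1:ℤ):ℝ)) + 1)) ^ p * W :=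
      Set.indicator_of_mem hmem _
    have hFle : F ^ p ≤ ((2:ℝ≥0∞) ^ ((((K - 1:ℤ):ℝ)) + 1)) ^ p := by
      refine ENNReal.rpow_le_rpow ?_ (by linarith)
      convert hK2 using 2
      push_cast
      ring
    calc F ^ p * W ≤ ((2:ℝ≥0∞) ^ ((((K - 1:ℤ):ℝ)) + 1)) ^ p * W := mul_le_mul_left hFle _
      _ = T (K - 1) := hTK.symm
      _ ≤ ∑' k : ℤ, T k := ENNReal.le_tsum _

lemma stepB {p : ℝ} (hp : 1 < p) (f w : (Fin n → ℝ) → ℝ) (hw : ∀ x, 0 ≤ w x) (k : ℤ) :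
    ∫⁻ x, ({y | (2:ℝ≥0∞) ^ ((k:ℝ)) < MHL f y}).indicator
        (fun y => ((2:ℝ≥0∞) ^ (((k:ℝ)) + 1)) ^ p * ENNReal.ofReal (w y)) x ≤
      (((2:ℝ≥0∞) ^ (((k:ℝ)) + 1)) ^ p / (2:ℝ≥0∞) ^ (((k:ℝ)) - 1)) *
        (6 ^ n * ∫⁻ x,
          (if (2:ℝ) ^ (((k:ℝ)) - 1) < |f x| then ENNReal.ofReal |f x| else 0) * MHL w x) := by
  set τ : ℝ := (2:ℝ) ^ (((k:ℝ)) - 1) with hτ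
  have hτpos : 0 < τ := Real.rpow_pos_of_pos (by norm_num) _
  set g : (Fin n → ℝ) → ℝ := fun y => if τ < |f y| then f y else 0 with hg
  set S := {y | (2:ℝ≥0∞) ^ ((k:ℝ)) < MHL f y} with hS
  set S' := {y | (2:ℝ≥0∞) ^ (((k:ℝ)) - 1) < MHL g y} with hS'
  set c : ℝ≥0∞ := ((2:ℝ≥0∞) ^ (((k:ℝ)) + 1)) ^ p with hc
  have hcne : c ≠ ∞ := by
    rw [hc, ← ENNReal.rpow_mul]; exact two_rpow_ne_top _
  have hSmeas : MeasurableSet S := (isOpen_MHL_gt f _).measurableSet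
  have hgabs : ∀ y, ENNReal.ofReal |g y| =
      (if τ < |f y| then ENNReal.ofReal |f y| else 0) := by
    intro y
    rw [hg]
    by_cases hy : τ < |f y| <;> simp [hy]
  have hsub : S ⊆ S' := by
    intro x hx
    have h2 := MHL_le_trunc f hτpos x
    rw [← hg, hτ, ofReal_two_rpow] at h2
    have hx' : (2:ℝ≥0∞) ^ ((k:ℝ)) < MHL g x + (2:ℝ≥0∞) ^ (((k:ℝ)) - 1) :=
      lt_of_lt_of_le hx h2
    have hsplit : (2:ℝ≥0∞) ^ ((k:ℝ)) =
        (2:ℝ≥0∞) ^ (((k:ℝ)) - 1) + (2:ℝ≥0∞) ^ (((k:ℝ)) - 1) := by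
      rw [← two_mul]
      nth_rewrite 1 [show (k:ℝ) = 1 + ((k:ℝ) - 1) by ring]
      rw [ENNReal.rpow_add _ _ (by norm_num) (by norm_num), ENNReal.rpow_one]
    rw [hsplit] at hx'
    exact (ENNReal.add_lt_add_iff_right (two_rpow_ne_top _)).1 hx'
  have hweak := weak ((2:ℝ≥0∞) ^ (((k:ℝ)) - 1)) (two_rpow_ne_zero _) g w
  have hwabs : ∀ x, ENNReal.ofReal |w x| = ENNReal.ofReal (w x) := fun x => by
    rw [abs_of_nonneg (hw x)]
  rw [← hS'] at hweak
  calc ∫⁻ x, S.indicator (fun y => c * ENNReal.ofReal (w y)) x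
      = ∫⁻ x in S, c * ENNReal.ofReal (w x) := lintegral_indicator hSmeas _
    _ = c * ∫⁻ x in S, ENNReal.ofReal (w x) := lintegral_const_mul' c _ hcne
    _ ≤ c * ∫⁻ x in S', ENNReal.ofReal (w x) := by
        exact mul_le_mul_right (lintegral_mono_set hsub) c
    _ ≤ c * ((6 ^ n * ∫⁻ x, ENNReal.ofReal |g x| * MHL w x) / (2:ℝ≥0∞) ^ (((k:ℝ)) - 1)) := by
        refine mul_le_mul_right ?_ c
        rw [ENNReal.le_div_iff_mul_le (Or.inl (two_rpow_ne_zero _))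
          (Or.inl (two_rpow_ne_top _)), mul_comm]
        refine le_trans (le_of_eq ?_) hweak
        congr 1
        exact lintegral_congr fun x => by rw [hwabs x]
    _ = (c / (2:ℝ≥0∞) ^ (((k:ℝ)) - 1)) *
        (6 ^ n * ∫⁻ x, ENNReal.ofReal |g x| * MHL w x) := by
        rw [div_eq_mul_inv, div_eq_mul_inv]; ring
    _ = _ := by
        congr 1
        congr 1
        refine lintegral_congr fun x => ?_
        rw [hgabs x]

lemma ek_eq {p : ℝ} (k : ℤ) :
    ((2:ℝ≥0∞) ^ (((k:ℝ)) + 1)) ^ p / (2:ℝ≥0∞) ^ (((k:ℝ)) - 1) =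
      (2:ℝ≥0∞) ^ (p + 1) * (2:ℝ≥0∞) ^ ((k:ℝ) * (p - 1)) := by
  rw [← ENNReal.rpow_mul,
    show ((k:ℝ) + 1) * p = ((p + 1) + (k:ℝ) * (p - 1)) + ((k:ℝ) - 1) by ring,
    ENNReal.rpow_add ((p + 1) + (k:ℝ) * (p - 1)) _ (by norm_num) (by norm_num),
    mul_div_assoc, ENNReal.div_self (two_rpow_ne_zero _) (two_rpow_ne_top _), mul_one,
    ENNReal.rpow_add _ _ (by norm_num) (by norm_num)]

lemma pointwiseC {p : ℝ} (hp : 1 < p) (f w : (Fin n → ℝ) → ℝ) (x : Fin n → ℝ) :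
    (∑' k : ℤ, (((2:ℝ≥0∞) ^ (((k:ℝ)) + 1)) ^ p / (2:ℝ≥0∞) ^ (((k:ℝ)) - 1) * 6 ^ n) *
        ((if (2:ℝ) ^ (((k:ℝ)) - 1) < |f x| then ENNReal.ofReal |f x| else 0) * MHL w x)) ≤
      ((6:ℝ≥0∞) ^ n * (2:ℝ≥0∞) ^ (p + 1) *
          ((2:ℝ≥0∞) ^ (p - 1) * (1 - (2:ℝ≥0∞) ^ (-(p - 1)))⁻¹)) *
        (ENNReal.ofReal (|f x| ^ p) * MHL w x) := by
  set a := ENNReal.ofReal |f x| with ha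
  set M := MHL w x with hM
  have hat : a ≠ ∞ := ENNReal.ofReal_ne_top
  have hcond : ∀ k : ℤ, ((2:ℝ) ^ (((k:ℝ)) - 1) < |f x|) ↔ ((2:ℝ≥0∞) ^ (((k:ℝ)) - 1) < a) := by
    intro k
    rw [ha, ← ofReal_two_rpow]
    exact (ENNReal.ofReal_lt_ofReal_iff_of_nonneg
      (Real.rpow_pos_of_pos (by norm_num) _).le).symm
  have hsummand : ∀ k : ℤ,
      (((2:ℝ≥0∞) ^ (((k:ℝ)) + 1)) ^ p / (2:ℝ≥0∞) ^ (((k:ℝ)) - 1) * 6 ^ n) *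
        ((if (2:ℝ) ^ (((k:ℝ)) - 1) < |f x| then a else 0) * M) =
      ((6:ℝ≥0∞) ^ n * (2:ℝ≥0∞) ^ (p + 1)) *
        ((if (2:ℝ≥0∞) ^ (((k:ℝ)) - 1) < a then (2:ℝ≥0∞) ^ ((k:ℝ) * (p - 1)) else 0) *
          (a * M)) := by
    intro k
    rw [ek_eq k]
    by_cases hk : (2:ℝ) ^ (((k:ℝ)) - 1) < |f x|
    · rw [if_pos hk, if_pos ((hcond k).1 hk)]
      ring
    · rw [if_neg hk, if_neg (fun h => hk ((hcond k).2 h))]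
      simp
  rw [tsum_congr hsummand, ENNReal.tsum_mul_left, ENNReal.tsum_mul_right]
  by_cases ha0 : a = 0
  · have : (∑' k : ℤ, (if (2:ℝ≥0∞) ^ (((k:ℝ)) - 1) < a then
        (2:ℝ≥0∞) ^ ((k:ℝ) * (p - 1)) else 0)) * (a * M) = 0 := by
      rw [ha0]
      simp
    rw [this, mul_zero]
    exact zero_le
  have hsum := pointwise_sum hp hat (p := p)
  have hpow : a ^ (p - 1) * a = ENNReal.ofReal (|f x| ^ p) := by
    nth_rewrite 2 [← ENNReal.rpow_one a]
    rw [← ENNReal.rpow_add _ _ ha0 hat, sub_add_cancel, ha,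
      ENNReal.ofReal_rpow_of_nonneg (abs_nonneg _) (by linarith)]
  calc ((6:ℝ≥0∞) ^ n * (2:ℝ≥0∞) ^ (p + 1)) *
      ((∑' k : ℤ, (if (2:ℝ≥0∞) ^ (((k:ℝ)) - 1) < a then
        (2:ℝ≥0∞) ^ ((k:ℝ) * (p - 1)) else 0)) * (a * M))
      ≤ ((6:ℝ≥0∞) ^ n * (2:ℝ≥0∞) ^ (p + 1)) *
        ((((2:ℝ≥0∞) ^ (p - 1) * (1 - (2:ℝ≥0∞) ^ (-(p - 1)))⁻¹) * a ^ (p - 1)) * (a * M)) := by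
        refine mul_le_mul_right (mul_le_mul_left hsum _) _
    _ = ((6:ℝ≥0∞) ^ n * (2:ℝ≥0∞) ^ (p + 1) *
          ((2:ℝ≥0∞) ^ (p - 1) * (1 - (2:ℝ≥0∞) ^ (-(p - 1)))⁻¹)) * ((a ^ (p - 1) * a) * M) := by
        ring
    _ = _ := by rw [hpow]

theorem fefferman_stein_strong' (n : ℕ) (p : ℝ) (hp : 1 < p) :
    ∃ C : ℝ, 0 < C ∧
      ∀ (w f : (Fin n → ℝ) → ℝ), (∀ x, 0 ≤ w x) → LocallyIntegrable w volume →
        LocallyIntegrable f volume →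
          ∫⁻ x, (MHL f x) ^ p * ENNReal.ofReal (w x) ≤
            ENNReal.ofReal C * ∫⁻ x, ENNReal.ofReal (|f x| ^ p) * MHL w x := by
  set D : ℝ≥0∞ := (1 - (2:ℝ≥0∞) ^ (-(p - 1)))⁻¹ with hD
  have hDne : D ≠ ∞ := by
    rw [hD, ENNReal.inv_ne_top]
    intro h
    have hlt : (2:ℝ≥0∞) ^ (-(p - 1)) < 1 :=
      ENNReal.rpow_lt_one_of_one_lt_of_neg (by norm_num) (by linarith)
    exact absurd (tsub_eq_zero_iff_le.1 h) (not_le.2 hlt)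
  set Cinf : ℝ≥0∞ := (6:ℝ≥0∞) ^ n * (2:ℝ≥0∞) ^ (p + 1) * ((2:ℝ≥0∞) ^ (p - 1) * D) with hCinf
  have hCinfne : Cinf ≠ ∞ := by
    rw [hCinf]
    exact ENNReal.mul_ne_top
      (ENNReal.mul_ne_top (ENNReal.pow_ne_top (by norm_num)) (two_rpow_ne_top _))
      (ENNReal.mul_ne_top (two_rpow_ne_top _) hDne)
  refine ⟨Cinf.toReal + 1, by positivity, ?_⟩
  intro w f hw hwl hfl
  have hle : Cinf ≤ ENNReal.ofReal (Cinf.toReal + 1) := by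
    conv_lhs => rw [← ENNReal.ofReal_toReal hCinfne]
    exact ENNReal.ofReal_le_ofReal (by linarith)
  set ψ : ℤ → (Fin n → ℝ) → ℝ≥0∞ := fun k x =>
    if (2:ℝ) ^ (((k:ℝ)) - 1) < |f x| then ENNReal.ofReal |f x| else 0 with hψdef
  set T : ℤ → (Fin n → ℝ) → ℝ≥0∞ := fun k =>
    ({y | (2:ℝ≥0∞) ^ ((k:ℝ)) < MHL f y}).indicator
      (fun y => ((2:ℝ≥0∞) ^ (((k:ℝ)) + 1)) ^ p * ENNReal.ofReal (w y)) with hTdef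
  have hW : AEMeasurable (fun x => ENNReal.ofReal (w x)) volume :=
    ENNReal.measurable_ofReal.comp_aemeasurable hwl.aestronglyMeasurable.aemeasurable
  have hT : ∀ k : ℤ, AEMeasurable (T k) volume := by
    intro k
    exact (hW.const_mul _).indicator (isOpen_MHL_gt f _).measurableSet
  obtain ⟨f', hf'm, hff'⟩ := hfl.aestronglyMeasurable.aemeasurable
  have hψ : ∀ k : ℤ, AEMeasurable (ψ k) volume := by
    intro k
    have hm : Measurable (fun x =>
        if (2:ℝ) ^ (((k:ℝ)) - 1) < |f' x| then ENNReal.ofReal |f' x| else 0) :=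
      Measurable.ite (measurableSet_lt measurable_const hf'm.abs)
        (ENNReal.measurable_ofReal.comp hf'm.abs) measurable_const
    refine hm.aemeasurable.congr (hff'.mono fun x hx => ?_)
    simp only [hψdef, ← hx]
  have hekne : ∀ k : ℤ,
      ((2:ℝ≥0∞) ^ (((k:ℝ)) + 1)) ^ p / (2:ℝ≥0∞) ^ (((k:ℝ)) - 1) * 6 ^ n ≠ ∞ := by
    intro k
    rw [ek_eq k]
    exact ENNReal.mul_ne_top (ENNReal.mul_ne_top (two_rpow_ne_top _) (two_rpow_ne_top _))
      (ENNReal.pow_ne_top (by norm_num))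
  calc ∫⁻ x, (MHL f x) ^ p * ENNReal.ofReal (w x)
      ≤ ∫⁻ x, ∑' k : ℤ, T k x := lintegral_mono (pointwiseA hp f w)
    _ = ∑' k : ℤ, ∫⁻ x, T k x := lintegral_tsum hT
    _ ≤ ∑' k : ℤ, (((2:ℝ≥0∞) ^ (((k:ℝ)) + 1)) ^ p / (2:ℝ≥0∞) ^ (((k:ℝ)) - 1)) *
        (6 ^ n * ∫⁻ x, ψ k x * MHL w x) :=
        ENNReal.tsum_le_tsum fun k => stepB hp f w hw k
    _ = ∑' k : ℤ, ∫⁻ x, (((2:ℝ≥0∞) ^ (((k:ℝ)) + 1)) ^ p / (2:ℝ≥0∞) ^ (((k:ℝ)) - 1) * 6 ^ n) *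
        (ψ k x * MHL w x) := by
        refine tsum_congr fun k => ?_
        rw [lintegral_const_mul' _ _ (hekne k), mul_assoc]
    _ = ∫⁻ x, ∑' k : ℤ, (((2:ℝ≥0∞) ^ (((k:ℝ)) + 1)) ^ p / (2:ℝ≥0∞) ^ (((k:ℝ)) - 1) * 6 ^ n) *
        (ψ k x * MHL w x) := by
        refine (lintegral_tsum fun k => ?_).symm
        exact ((hψ k).mul (measurable_MHL w).aemeasurable).const_mul _
    _ ≤ ∫⁻ x, Cinf * (ENNReal.ofReal (|f x| ^ p) * MHL w x) := by
        refine lintegral_mono fun x => ?_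
        exact pointwiseC hp f w x
    _ = Cinf * ∫⁻ x, ENNReal.ofReal (|f x| ^ p) * MHL w x :=
        lintegral_const_mul' _ _ hCinfne
    _ ≤ ENNReal.ofReal (Cinf.toReal + 1) * ∫⁻ x, ENNReal.ofReal (|f x| ^ p) * MHL w x :=
        mul_le_mul_left hle _

/-- The strong (p,p) Fefferman–Stein inequality. -/
theorem fefferman_stein_strong (n : ℕ) (p : ℝ) (hp : 1 < p) :
    ∃ C : ℝ, 0 < C ∧
      ∀ (w f : (Fin n → ℝ) → ℝ), (∀ x, 0 ≤ w x) → LocallyIntegrable w volume →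
        LocallyIntegrable f volume →
          ∫⁻ x, (MHL f x) ^ p * ENNReal.ofReal (w x) ≤
            ENNReal.ofReal C * ∫⁻ x, ENNReal.ofReal (|f x| ^ p) * MHL w x := by
  exact fefferman_stein_strong' n p hp
end
end

section
/- Under the hypotheses of the exponential multiplicity bound (dyadic rectangles R̃_1, …, R̃_N with non-increasing long sides and |R̃_i ∩ ⋃_{j<i} R̃_j| < (1/3)|R̃_i|), for every integer k ≥ 1 and every i, ∫_{R̃_i} (Σ_{j=1}^i 𝟙_{R̃_j}(x))^{k−1} dx ≤ |R̃_i| Σ_{n=1}^∞ n^{k−1} 3^{1−n}. -/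
open MeasureTheory Set
open scoped ENNReal Classical
noncomputable section

def dInt (m k : ℤ) : Set ℝ := Set.Ico ((m : ℝ) * 2 ^ k) (((m : ℝ) + 1) * 2 ^ k)

lemma dInt_meas (m k : ℤ) : MeasurableSet (dInt m k) := measurableSet_Ico

lemma dInt_nonempty (m k : ℤ) : (dInt m k).Nonempty := by
  refine nonempty_Ico.2 ?_
  have h2 : (0:ℝ) < (2:ℝ)^k := zpow_pos (by norm_num) _
  nlinarith

lemma volume_dInt (m k : ℤ) : volume (dInt m k) = ENNReal.ofReal ((2:ℝ)^k) := by
  rw [dInt, Real.volume_Ico]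
  congr 1
  ring

lemma volume_dInt_pos (m k : ℤ) : 0 < volume (dInt m k) := by
  rw [volume_dInt]
  exact ENNReal.ofReal_pos.2 (zpow_pos (by norm_num) _)

lemma volume_dInt_ne_top (m k : ℤ) : volume (dInt m k) ≠ ⊤ := by
  rw [volume_dInt]; exact ENNReal.ofReal_ne_top

/-- common point + shorter exponent implies contained -/
lemma dInt_subset (m k m' k' : ℤ) (hk : k ≤ k') {x : ℝ}
    (hx : x ∈ dInt m k) (hx' : x ∈ dInt m' k') : dInt m k ⊆ dInt m' k' := by
  obtain ⟨h1, h2⟩ := hx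
  obtain ⟨h1', h2'⟩ := hx'
  have h2pos : (0:ℝ) < (2:ℝ)^k := zpow_pos (by norm_num) _
  set d : ℕ := (k' - k).toNat with hd
  have hdk : k' = k + (d:ℤ) := by omega
  have h2d : (2:ℝ)^k' = (2:ℝ)^k * (2:ℝ)^d := by
    rw [hdk, zpow_add₀ (by norm_num : (2:ℝ) ≠ 0), zpow_natCast]
  -- integer inequalities
  have key1 : (m':ℤ) * 2^d ≤ m := by
    have : (m':ℝ) * 2^k' < (m+1) * 2^k := lt_of_le_of_lt h1' h2
    rw [h2d] at this
    have : (m':ℝ) * 2^d < (m:ℝ) + 1 := by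
      nlinarith
    have : ((m' * 2^d : ℤ) : ℝ) < ((m + 1 : ℤ) : ℝ) := by push_cast; linarith
    have := Int.cast_lt.1 this
    omega
  have key2 : (m + 1 : ℤ) ≤ (m' + 1) * 2^d := by
    have : (m:ℝ) * 2^k < (m'+1) * 2^k' := lt_of_le_of_lt h1 h2'
    rw [h2d] at this
    have : (m:ℝ) < ((m':ℝ)+1) * 2^d := by nlinarith
    have : ((m:ℤ):ℝ) < (((m'+1) * 2^d : ℤ) : ℝ) := by push_cast; linarith
    have := Int.cast_lt.1 this
    omega
  intro y hy
  obtain ⟨hy1, hy2⟩ := hy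
  constructor
  · have : ((m' * 2^d : ℤ):ℝ) ≤ ((m:ℤ):ℝ) := Int.cast_le.2 key1
    push_cast at this
    calc (m':ℝ) * 2^k' = ((m':ℝ) * 2^d) * 2^k := by rw [h2d]; ring
    _ ≤ (m:ℝ) * 2^k := by nlinarith
    _ ≤ y := hy1
  · have : ((m+1:ℤ):ℝ) ≤ (((m'+1) * 2^d : ℤ):ℝ) := Int.cast_le.2 key2
    push_cast at this
    calc y < ((m:ℝ)+1) * 2^k := hy2
    _ ≤ (((m':ℝ)+1) * 2^d) * 2^k := by nlinarith
    _ = ((m':ℝ)+1) * 2^k' := by rw [h2d]; ring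

lemma dInt_exp_le_of_subset {m k m' k' : ℤ} (h : dInt m k ⊆ dInt m' k') : k ≤ k' := by
  have h2k : (0:ℝ) < (2:ℝ)^k := zpow_pos (by norm_num) _
  have h2k' : (0:ℝ) < (2:ℝ)^k' := zpow_pos (by norm_num) _
  have hl := h (left_mem_Ico.2 (by nlinarith) : (m:ℝ)*2^k ∈ dInt m k)
  by_contra hlt
  push_neg at hlt
  -- k' < k : then dInt m' k' ⊊ length smaller; get contradiction via measure
  have hsub : ENNReal.ofReal ((2:ℝ)^k) ≤ ENNReal.ofReal ((2:ℝ)^k') := by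
    rw [← volume_dInt, ← volume_dInt]; exact measure_mono h
  have : (2:ℝ)^k ≤ (2:ℝ)^k' := (ENNReal.ofReal_le_ofReal_iff (le_of_lt h2k')).1 hsub
  have := (zpow_lt_zpow_iff_right₀ (by norm_num : (1:ℝ) < 2)).2 hlt
  linarith

lemma dInt_eq_of_subset_of_le {m k m' k' : ℤ} (h : dInt m k ⊆ dInt m' k') (hk : k' ≤ k) :
    dInt m k = dInt m' k' := by
  have hk' : k = k' := le_antisymm (dInt_exp_le_of_subset h) hk
  subst hk'
  have h2k : (0:ℝ) < (2:ℝ)^k := zpow_pos (by norm_num) _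
  have hl := h (left_mem_Ico.2 (by nlinarith) : (m:ℝ)*2^k ∈ dInt m k)
  obtain ⟨h1, h2⟩ := hl
  have : m' ≤ m := by
    have : ((m':ℤ):ℝ) ≤ ((m:ℤ):ℝ) := by
      have := (mul_le_mul_iff_of_pos_right h2k).1 h1
      push_cast; linarith [(mul_le_mul_iff_of_pos_right h2k).1 h1]
    exact_mod_cast this
  have : m ≤ m' := by
    have : ((m:ℤ):ℝ) < ((m':ℤ):ℝ) + 1 := by
      have := (mul_lt_mul_iff_of_pos_right h2k).1 h2
      push_cast; linarith
    have : ((m:ℤ):ℝ) < ((m' + 1 : ℤ):ℝ) := by push_cast; linarith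
    have := Int.cast_lt.1 this
    omega
  have : m = m' := le_antisymm this (by omega)
  subst this
  rfl

lemma dInt_inj {m k m' k' : ℤ} (h : dInt m k = dInt m' k') : m = m' ∧ k = k' := by
  have h1 : k ≤ k' := dInt_exp_le_of_subset h.le
  have h2 : k' ≤ k := dInt_exp_le_of_subset h.ge
  have hk : k = k' := le_antisymm h1 h2
  subst hk
  have h2k : (0:ℝ) < (2:ℝ)^k := zpow_pos (by norm_num) _
  have hl := h.le (left_mem_Ico.2 (by nlinarith) : (m:ℝ)*2^k ∈ dInt m k)
  have hr := h.ge (left_mem_Ico.2 (by nlinarith) : (m':ℝ)*2^k ∈ dInt m' k)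
  obtain ⟨a1, a2⟩ := hl
  obtain ⟨b1, b2⟩ := hr
  have : m = m' := by
    have hmm : ((m':ℤ):ℝ) ≤ ((m:ℤ):ℝ) := by exact_mod_cast (mul_le_mul_iff_of_pos_right h2k).1 a1
    have hmm' : ((m:ℤ):ℝ) ≤ ((m':ℤ):ℝ) := by exact_mod_cast (mul_le_mul_iff_of_pos_right h2k).1 b1
    exact_mod_cast le_antisymm hmm' hmm
  exact ⟨this, rfl⟩

/-- The interval component of a rectangle datum. -/
def dIx {N : ℕ} (c : Fin N → ℤ × ℤ) (j : Fin N) : Set ℝ := dInt (c j).1 (c j).2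

section Main

variable {N : ℕ} {a b : Fin N → ℤ × ℤ} {R : Fin N → Set (ℝ × ℝ)}

lemma dIx_meas (c : Fin N → ℤ × ℤ) (j : Fin N) : MeasurableSet (dIx c j) := dInt_meas _ _

lemma R_meas (hR : ∀ i, R i = dIx a i ×ˢ dIx b i) (j : Fin N) : MeasurableSet (R j) := by
  rw [hR]; exact (dIx_meas a j).prod (dIx_meas b j)

lemma volume_R (hR : ∀ i, R i = dIx a i ×ˢ dIx b i) (j : Fin N) :
    volume (R j) = volume (dIx a j) * volume (dIx b j) := by
  rw [hR, Measure.volume_eq_prod]; exact Measure.prod_prod _ _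

/-- Key exclusion lemma: an earlier rectangle's vertical side, meeting the later one's,
is strictly contained in it. -/
lemma L3 (hR : ∀ i, R i = dIx a i ×ˢ dIx b i)
    (hmono : ∀ i j : Fin N, i ≤ j → (a j).2 ≤ (a i).2)
    (hsel : ∀ i : Fin N, 0 < (i : ℕ) →
      volume (R i ∩ ⋃ j : {j : Fin N // (j : ℕ) < (i : ℕ)}, R j) < 3⁻¹ * volume (R i))
    {i j j' : Fin N} (hj'j : j' < j) (hji : j ≤ i)
    (hIj' : dIx a i ⊆ dIx a j') (hIj : dIx a i ⊆ dIx a j)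
    {y : ℝ} (hy' : y ∈ dIx b j') (hy : y ∈ dIx b j) :
    dIx b j' ⊆ dIx b j ∧ ¬ (dIx b j ⊆ dIx b j') := by
  obtain ⟨z, hz⟩ := dInt_nonempty (a i).1 (a i).2
  have hIsub : dIx a j ⊆ dIx a j' :=
    dInt_subset _ _ _ _ (hmono j' j hj'j.le) (hIj hz) (hIj' hz)
  have hnot : ¬ (dIx b j ⊆ dIx b j') := by
    intro hJ
    have hRsub : R j ⊆ R j' := by
      rw [hR, hR]; exact Set.prod_mono hIsub hJ
    have hjpos : 0 < (j : ℕ) := lt_of_le_of_lt (Nat.zero_le _) (Fin.lt_iff_val_lt_val.mp hj'j)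
    have hmem : R j ⊆ R j ∩ ⋃ j'' : {j'' : Fin N // (j'' : ℕ) < (j : ℕ)}, R j'' := by
      refine Set.subset_inter subset_rfl ?_
      exact hRsub.trans (Set.subset_iUnion (fun j'' : {j'' : Fin N // (j'' : ℕ) < (j : ℕ)} => R (j'' : Fin N)) ⟨j', hj'j⟩)
    have h1 : volume (R j) ≤ volume (R j ∩ ⋃ j'' : {j'' : Fin N // (j'' : ℕ) < (j : ℕ)}, R j'') :=
      measure_mono hmem
    have h2 := hsel j hjpos
    have h3 : volume (R j) < 3⁻¹ * volume (R j) := lt_of_le_of_lt h1 h2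
    have h4 : (3:ℝ≥0∞)⁻¹ * volume (R j) ≤ 1 * volume (R j) :=
      mul_le_mul_left (ENNReal.inv_le_one.2 (by norm_num)) _
    rw [one_mul] at h4
    exact absurd (lt_of_lt_of_le h3 h4) (lt_irrefl _)
  constructor
  · rcases le_total (b j').2 (b j).2 with h | h
    · exact dInt_subset _ _ _ _ h hy' hy
    · exact absurd (dInt_subset _ _ _ _ h hy hy') hnot
  · exact hnot

/-- 1-D form of the selection hypothesis. -/
lemma sel1d (hR : ∀ i, R i = dIx a i ×ˢ dIx b i)
    (hmono : ∀ i j : Fin N, i ≤ j → (a j).2 ≤ (a i).2)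
    (hsel : ∀ i : Fin N, 0 < (i : ℕ) →
      volume (R i ∩ ⋃ j : {j : Fin N // (j : ℕ) < (i : ℕ)}, R j) < 3⁻¹ * volume (R i))
    {i e : Fin N} (hIe : dIx a i ⊆ dIx a e)
    (S : Finset (Fin N)) (hS : ∀ j ∈ S, j < e ∧ dIx a i ⊆ dIx a j) :
    volume (⋃ j ∈ S, (dIx b j ∩ dIx b e)) ≤ 3⁻¹ * volume (dIx b e) := by
  rcases S.eq_empty_or_nonempty with rfl | ⟨j₀, hj₀⟩
  · simp
  have hepos : 0 < (e : ℕ) := lt_of_le_of_lt (Nat.zero_le _) (Fin.lt_iff_val_lt_val.mp (hS j₀ hj₀).1)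
  obtain ⟨z, hz⟩ := dInt_nonempty (a i).1 (a i).2
  have hIsub : ∀ j ∈ S, dIx a e ⊆ dIx a j := fun j hj =>
    dInt_subset _ _ _ _ (hmono j e (hS j hj).1.le) (hIe hz) ((hS j hj).2 hz)
  set U := ⋃ j ∈ S, (dIx b j ∩ dIx b e) with hU
  have hprod : dIx a e ×ˢ U ⊆ R e ∩ ⋃ j : {j : Fin N // (j : ℕ) < (e : ℕ)}, R j := by
    rintro ⟨x, y⟩ ⟨hx, hy⟩
    simp only [hU, Set.mem_iUnion] at hy
    obtain ⟨j, hjS, hyj, hye⟩ := hy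
    constructor
    · rw [hR]; exact ⟨hx, hye⟩
    · refine Set.mem_iUnion.2 ⟨⟨j, (hS j hjS).1⟩, ?_⟩
      rw [hR]; exact ⟨hIsub j hjS hx, hyj⟩
  have hvol : volume (dIx a e ×ˢ U) = volume (dIx a e) * volume U := by
    rw [Measure.volume_eq_prod]; exact Measure.prod_prod _ _
  have h1 : volume (dIx a e) * volume U ≤ 3⁻¹ * volume (R e) := by
    rw [← hvol]
    exact (measure_mono hprod).trans (hsel e hepos).le
  rw [volume_R hR] at h1
  have h2 : volume (dIx a e) * volume U ≤ volume (dIx a e) * (3⁻¹ * volume (dIx b e)) := by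
    calc volume (dIx a e) * volume U ≤ 3⁻¹ * (volume (dIx a e) * volume (dIx b e)) := h1
    _ = volume (dIx a e) * (3⁻¹ * volume (dIx b e)) := by ring
  exact (ENNReal.mul_le_mul_iff_right (volume_dInt_pos (a e).1 (a e).2).ne' (volume_dInt_ne_top _ _)).1 h2

end Main

def Tset {N : ℕ} (a b : Fin N → ℤ × ℤ) (i : Fin N) : Finset (Fin N) :=
  Finset.univ.filter fun j => j < i ∧ dIx a i ⊆ dIx a j ∧ dIx b j ⊆ dIx b i

def Mset {N : ℕ} (a b : Fin N → ℤ × ℤ) (i : Fin N) : ℕ → Finset (Fin N)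
  | 0 => Tset a b i
  | n+1 => (Tset a b i).filter fun j => ∃ j' ∈ Mset a b i n, j < j' ∧ dIx b j ⊆ dIx b j'

section Main2

variable {N : ℕ} {a b : Fin N → ℤ × ℤ} {R : Fin N → Set (ℝ × ℝ)} {i : Fin N}

lemma mem_Tset {j : Fin N} :
    j ∈ Tset a b i ↔ j < i ∧ dIx a i ⊆ dIx a j ∧ dIx b j ⊆ dIx b i := by
  simp [Tset]

lemma Mset_zero : Mset a b i 0 = Tset a b i := rfl

lemma Mset_succ (n : ℕ) : Mset a b i (n+1)
    = (Tset a b i).filter fun j => ∃ j' ∈ Mset a b i n, j < j' ∧ dIx b j ⊆ dIx b j' := rfl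

lemma Mset_subset_Tset (n : ℕ) : Mset a b i n ⊆ Tset a b i := by
  cases n with
  | zero => exact subset_rfl
  | succ n => exact Finset.filter_subset _ _

lemma Mset_mono (n : ℕ) : Mset a b i (n+1) ⊆ Mset a b i n := by
  induction n with
  | zero => exact Finset.filter_subset _ _
  | succ n ih =>
    intro j hj
    rw [Mset_succ] at hj
    obtain ⟨hT, j', hj', hlt, hsub⟩ := Finset.mem_filter.1 hj |>.imp id (fun h => h)
    · rw [Mset_succ]
      exact Finset.mem_filter.2 ⟨hT, j', ih hj', hlt, hsub⟩

variable (hR : ∀ i, R i = dIx a i ×ˢ dIx b i)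
  (hmono : ∀ i j : Fin N, i ≤ j → (a j).2 ≤ (a i).2)
  (hsel : ∀ i : Fin N, 0 < (i : ℕ) →
      volume (R i ∩ ⋃ j : {j : Fin N // (j : ℕ) < (i : ℕ)}, R j) < 3⁻¹ * volume (R i))

include hR hmono hsel

lemma depth {y : ℝ} : ∀ n : ℕ, ∀ j ∈ (Tset a b i).filter (fun j => y ∈ dIx b j),
    n ≤ (((Tset a b i).filter (fun j => y ∈ dIx b j)).filter (fun j' => j < j')).card →
    j ∈ Mset a b i n := by
  intro n
  induction n with
  | zero =>
    intro j hj _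
    exact (Finset.mem_filter.1 hj).1
  | succ n ih =>
    intro j hj hcard
    set Sy := (Tset a b i).filter (fun j => y ∈ dIx b j) with hSy
    have hne : (Sy.filter (fun j' => j < j')).Nonempty :=
      Finset.card_pos.1 (lt_of_lt_of_le (Nat.succ_pos n) hcard)
    set j' := Finset.min' _ hne with hj'def
    have hj'mem : j' ∈ Sy.filter (fun j'' => j < j'') := Finset.min'_mem _ hne
    have hj'S : j' ∈ Sy := (Finset.mem_filter.1 hj'mem).1
    have hjj' : j < j' := (Finset.mem_filter.1 hj'mem).2
    have herase : (Sy.filter (fun j'' => j < j'')).erase j' ⊆ Sy.filter (fun j'' => j' < j'') := by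
      intro x hx
      obtain ⟨hne', hxmem⟩ := Finset.mem_erase.1 hx
      exact Finset.mem_filter.2 ⟨(Finset.mem_filter.1 hxmem).1,
        lt_of_le_of_ne (Finset.min'_le _ _ hxmem) (Ne.symm hne')⟩
    have hcard' : n ≤ (Sy.filter (fun j'' => j' < j'')).card := by
      have h1 : n ≤ ((Sy.filter (fun j'' => j < j'')).erase j').card := by
        rw [Finset.card_erase_of_mem hj'mem]; omega
      exact le_trans h1 (Finset.card_le_card herase)
    have hj'M : j' ∈ Mset a b i n := ih j' hj'S hcard'
    have hjT := Finset.mem_filter.1 hj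
    have hj'T := Finset.mem_filter.1 hj'S
    have hjT' := mem_Tset.1 hjT.1
    have hj'T' := mem_Tset.1 hj'T.1
    have hJsub : dIx b j ⊆ dIx b j' :=
      (L3 hR hmono hsel hjj' hj'T'.1.le hjT'.2.1 hj'T'.2.1 hjT.2 hj'T.2).1
    rw [Mset_succ]
    exact Finset.mem_filter.2 ⟨hjT.1, j', hj'M, hjj', hJsub⟩

lemma cover {y : ℝ} {n : ℕ}
    (h : n + 1 ≤ ((Tset a b i).filter (fun j => y ∈ dIx b j)).card) :
    ∃ j ∈ Mset a b i n, y ∈ dIx b j := by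
  set Sy := (Tset a b i).filter (fun j => y ∈ dIx b j) with hSy
  have hne : Sy.Nonempty := Finset.card_pos.1 (by omega)
  set j := Finset.min' _ hne with hjdef
  have hjmem : j ∈ Sy := Finset.min'_mem _ hne
  have herase : Sy.erase j ⊆ Sy.filter (fun j'' => j < j'') := by
    intro x hx
    obtain ⟨hne', hxmem⟩ := Finset.mem_erase.1 hx
    exact Finset.mem_filter.2 ⟨hxmem, lt_of_le_of_ne (Finset.min'_le _ _ hxmem) (Ne.symm hne')⟩
  have hcard : n ≤ (Sy.filter (fun j'' => j < j'')).card := by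
    have h1 : n ≤ (Sy.erase j).card := by rw [Finset.card_erase_of_mem hjmem]; omega
    exact le_trans h1 (Finset.card_le_card herase)
  exact ⟨j, depth hR hmono hsel n j hjmem hcard, (Finset.mem_filter.1 hjmem).2⟩

lemma depth_lb : ∀ n : ℕ, ∀ j ∈ Mset a b i n, ∀ y ∈ dIx b j,
    n + 1 ≤ (((Tset a b i).filter (fun j' => y ∈ dIx b j')).filter (fun j'' => j ≤ j'')).card := by
  intro n
  induction n with
  | zero =>
    intro j hj y hy
    refine Finset.card_pos.2 ⟨j, ?_⟩
    exact Finset.mem_filter.2 ⟨Finset.mem_filter.2 ⟨hj, hy⟩, le_refl j⟩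
  | succ n ih =>
    intro j hj y hy
    rw [Mset_succ] at hj
    obtain ⟨hjT, j', hj'M, hlt, hsub⟩ := Finset.mem_filter.1 hj
    have hy' : y ∈ dIx b j' := hsub hy
    have hIH := ih j' hj'M y hy'
    set Sy := (Tset a b i).filter (fun j' => y ∈ dIx b j') with hSydef
    have hnotmem : j ∉ Sy.filter (fun j'' => j' ≤ j'') := by
      intro h
      exact absurd (Finset.mem_filter.1 h).2 (not_le.2 hlt)
    have hins : insert j (Sy.filter (fun j'' => j' ≤ j'')) ⊆ Sy.filter (fun j'' => j ≤ j'') := by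
      intro x hx
      rcases Finset.mem_insert.1 hx with rfl | hx
      · exact Finset.mem_filter.2 ⟨Finset.mem_filter.2 ⟨hjT, hy⟩, le_refl x⟩
      · have := Finset.mem_filter.1 hx
        exact Finset.mem_filter.2 ⟨this.1, le_trans hlt.le this.2⟩
    calc n + 2 = (n + 1) + 1 := rfl
    _ ≤ (Sy.filter (fun j'' => j' ≤ j'')).card + 1 := by omega
    _ = (insert j (Sy.filter (fun j'' => j' ≤ j''))).card := (Finset.card_insert_of_notMem hnotmem).symm
    _ ≤ (Sy.filter (fun j'' => j ≤ j'')).card := Finset.card_le_card hins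

end Main2

section Main3

variable {N : ℕ} {a b : Fin N → ℤ × ℤ} {R : Fin N → Set (ℝ × ℝ)} {i : Fin N}

variable (hR : ∀ i, R i = dIx a i ×ˢ dIx b i)
  (hmono : ∀ i j : Fin N, i ≤ j → (a j).2 ≤ (a i).2)
  (hsel : ∀ i : Fin N, 0 < (i : ℕ) →
      volume (R i ∩ ⋃ j : {j : Fin N // (j : ℕ) < (i : ℕ)}, R j) < 3⁻¹ * volume (R i))

include hR hmono hsel

lemma Ustep (n : ℕ) :
    volume (⋃ j ∈ Mset a b i (n+1), dIx b j) ≤ 3⁻¹ * volume (⋃ j ∈ Mset a b i n, dIx b j) := by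
  classical
  set Mn := Mset a b i n with hMn
  set maxJ := Mn.filter (fun j => ∀ j' ∈ Mn, dIx b j ⊆ dIx b j' → dIx b j = dIx b j') with hmaxJ
  -- every element of Mn lies below a maximal one
  have hmaxex : ∀ j ∈ Mn, ∃ jmax ∈ maxJ, dIx b j ⊆ dIx b jmax := by
    intro j hj
    set S' := Mn.filter (fun j' => dIx b j ⊆ dIx b j') with hS'
    have hS'ne : S'.Nonempty := ⟨j, Finset.mem_filter.2 ⟨hj, subset_rfl⟩⟩
    obtain ⟨jmax, hjmaxS', hmax⟩ := S'.exists_max_image (fun j' => (b j').2) hS'ne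
    have hjmax := Finset.mem_filter.1 hjmaxS'
    refine ⟨jmax, ?_, hjmax.2⟩
    refine Finset.mem_filter.2 ⟨hjmax.1, ?_⟩
    intro j' hj' hsub
    have hj'S' : j' ∈ S' := Finset.mem_filter.2 ⟨hj', hjmax.2.trans hsub⟩
    exact dInt_eq_of_subset_of_le hsub (hmax j' hj'S')
  set V := maxJ.image b with hV
  have hcoverU : (⋃ j ∈ Mn, dIx b j) = ⋃ p ∈ V, dInt p.1 p.2 := by
    apply subset_antisymm
    · intro y hy
      obtain ⟨j, hj, hyj⟩ := Set.mem_iUnion₂.1 hy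
      obtain ⟨jmax, hjmax, hsub⟩ := hmaxex j hj
      exact Set.mem_iUnion₂.2 ⟨b jmax, Finset.mem_image.2 ⟨jmax, hjmax, rfl⟩, hsub hyj⟩
    · intro y hy
      obtain ⟨p, hp, hyp⟩ := Set.mem_iUnion₂.1 hy
      obtain ⟨jmax, hjmax, rfl⟩ := Finset.mem_image.1 hp
      exact Set.mem_iUnion₂.2 ⟨jmax, (Finset.filter_subset _ _) hjmax, hyp⟩
  have hdisj : (V : Set (ℤ × ℤ)).PairwiseDisjoint (fun p : ℤ × ℤ => dInt p.1 p.2) := by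
    intro p hp q hq hpq
    obtain ⟨jmax₁, hjmax₁, rfl⟩ := Finset.mem_image.1 (Finset.mem_coe.1 hp)
    obtain ⟨jmax₂, hjmax₂, rfl⟩ := Finset.mem_image.1 (Finset.mem_coe.1 hq)
    have hm1 := Finset.mem_filter.1 hjmax₁
    have hm2 := Finset.mem_filter.1 hjmax₂
    have hgoal : Disjoint (dInt (b jmax₁).1 (b jmax₁).2) (dInt (b jmax₂).1 (b jmax₂).2) := by
      rw [Set.disjoint_iff_inter_eq_empty]
      by_contra hnd
      obtain ⟨y, hy1, hy2⟩ := Set.nonempty_iff_ne_empty.2 hnd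
      have : b jmax₁ = b jmax₂ := by
        rcases le_total (b jmax₁).2 (b jmax₂).2 with h | h
        · have hsub : dIx b jmax₁ ⊆ dIx b jmax₂ := dInt_subset _ _ _ _ h hy1 hy2
          have heq := hm1.2 jmax₂ hm2.1 hsub
          obtain ⟨h1, h2⟩ := dInt_inj heq
          exact Prod.ext h1 h2
        · have hsub : dIx b jmax₂ ⊆ dIx b jmax₁ := dInt_subset _ _ _ _ h hy2 hy1
          have heq := hm2.2 jmax₁ hm1.1 hsub
          obtain ⟨h1, h2⟩ := dInt_inj heq
          exact (Prod.ext h1 h2).symm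
      exact hpq this
    exact hgoal
  have hpiece : ∀ jmax ∈ maxJ,
      volume ((⋃ j ∈ Mset a b i (n+1), dIx b j) ∩ dIx b jmax) ≤ 3⁻¹ * volume (dIx b jmax) := by
    intro jmax hjmaxmax
    have hjmaxMn : jmax ∈ Mn := (Finset.filter_subset _ _) hjmaxmax
    have hjmaxT : jmax ∈ Tset a b i := Mset_subset_Tset n hjmaxMn
    have hjmaxT' := mem_Tset.1 hjmaxT
    set S := (Tset a b i).filter (fun j => j < jmax) with hS
    have hsub2 : (⋃ j ∈ Mset a b i (n+1), dIx b j) ∩ dIx b jmax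
        ⊆ ⋃ j₁ ∈ S, (dIx b j₁ ∩ dIx b jmax) := by
      rintro y ⟨hyU, hyjmax⟩
      obtain ⟨j₁, hj₁M, hyj₁⟩ := Set.mem_iUnion₂.1 hyU
      rw [Mset_succ] at hj₁M
      obtain ⟨hj₁T, j₂, hj₂M, hlt12, hsub12⟩ := Finset.mem_filter.1 hj₁M
      have hyj₂ : y ∈ dIx b j₂ := hsub12 hyj₁
      have hj₂T := Mset_subset_Tset n hj₂M
      have hj₁T' := mem_Tset.1 hj₁T
      have hj₂T' := mem_Tset.1 hj₂T
      have hsub2jmax : dIx b j₂ ⊆ dIx b jmax := by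
        rcases le_total (b j₂).2 (b jmax).2 with h | h
        · exact dInt_subset _ _ _ _ h hyj₂ hyjmax
        · have h' : dIx b jmax ⊆ dIx b j₂ := dInt_subset _ _ _ _ h hyjmax hyj₂
          exact ((Finset.mem_filter.1 hjmaxmax).2 j₂ hj₂M h').ge
      have hlt : j₁ < jmax := by
        rcases lt_trichotomy j₁ jmax with h | h | h
        · exact h
        · exfalso
          subst h
          have hnot := (L3 hR hmono hsel hlt12 hj₂T'.1.le hj₁T'.2.1 hj₂T'.2.1 hyj₁ hyj₂).2
          exact hnot hsub2jmax
        · exfalso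
          have hnot := (L3 hR hmono hsel h hj₁T'.1.le hjmaxT'.2.1 hj₁T'.2.1 hyjmax hyj₁).2
          exact hnot (hsub12.trans hsub2jmax)
      exact Set.mem_iUnion₂.2 ⟨j₁, Finset.mem_filter.2 ⟨hj₁T, hlt⟩, hyj₁, hyjmax⟩
    refine le_trans (measure_mono hsub2) (sel1d hR hmono hsel hjmaxT'.2.1 S ?_)
    intro j hj
    have := Finset.mem_filter.1 hj
    exact ⟨this.2, (mem_Tset.1 this.1).2.1⟩
  -- assemble
  have hUsub : (⋃ j ∈ Mset a b i (n+1), dIx b j) ⊆ ⋃ p ∈ V, dInt p.1 p.2 := by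
    rw [← hcoverU]
    exact Set.iUnion₂_mono' fun j hj => ⟨j, Mset_mono n hj, subset_rfl⟩
  calc volume (⋃ j ∈ Mset a b i (n+1), dIx b j)
      ≤ volume (⋃ p ∈ V, ((⋃ j ∈ Mset a b i (n+1), dIx b j) ∩ dInt p.1 p.2)) := by
        refine measure_mono ?_
        intro y hy
        obtain ⟨p, hp, hyp⟩ := Set.mem_iUnion₂.1 (hUsub hy)
        exact Set.mem_iUnion₂.2 ⟨p, hp, hy, hyp⟩
    _ ≤ ∑ p ∈ V, volume ((⋃ j ∈ Mset a b i (n+1), dIx b j) ∩ dInt p.1 p.2) :=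
        measure_biUnion_finset_le V _
    _ ≤ ∑ p ∈ V, 3⁻¹ * volume (dInt p.1 p.2) := by
        refine Finset.sum_le_sum ?_
        intro p hp
        obtain ⟨jmax, hjmax, rfl⟩ := Finset.mem_image.1 hp
        exact hpiece jmax hjmax
    _ = 3⁻¹ * ∑ p ∈ V, volume (dInt p.1 p.2) := by rw [Finset.mul_sum]
    _ = 3⁻¹ * volume (⋃ p ∈ V, dInt p.1 p.2) := by
        rw [measure_biUnion_finset hdisj (fun p _ => dInt_meas p.1 p.2)]
    _ = 3⁻¹ * volume (⋃ j ∈ Mn, dIx b j) := by rw [hcoverU]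

lemma Ubound (n : ℕ) :
    volume (⋃ j ∈ Mset a b i n, dIx b j) ≤ 3⁻¹ ^ (n+1) * volume (dIx b i) := by
  induction n with
  | zero =>
    have h0 : (⋃ j ∈ Mset a b i 0, dIx b j) = ⋃ j ∈ Tset a b i, (dIx b j ∩ dIx b i) := by
      rw [Mset_zero]
      refine Set.iUnion₂_congr ?_
      intro j hj
      rw [Set.inter_eq_left.2 (mem_Tset.1 hj).2.2]
    rw [h0, pow_one]
    refine sel1d hR hmono hsel subset_rfl (Tset a b i) ?_
    intro j hj
    exact ⟨(mem_Tset.1 hj).1, (mem_Tset.1 hj).2.1⟩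
  | succ n ih =>
    calc volume (⋃ j ∈ Mset a b i (n+1), dIx b j)
        ≤ 3⁻¹ * volume (⋃ j ∈ Mset a b i n, dIx b j) := Ustep hR hmono hsel n
      _ ≤ 3⁻¹ * (3⁻¹ ^ (n+1) * volume (dIx b i)) := mul_le_mul_right ih _
      _ = 3⁻¹ ^ (n+2) * volume (dIx b i) := by rw [← mul_assoc, ← pow_succ']

lemma filter_eq_insert (x : ℝ × ℝ) (hx1 : x.1 ∈ dIx a i) (hx2 : x.2 ∈ dIx b i) :
    (Finset.univ.filter fun j : Fin N => j ≤ i ∧ x ∈ R j)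
      = insert i ((Tset a b i).filter fun j => x.2 ∈ dIx b j) := by
  have hxR : x ∈ R i := by rw [hR]; exact ⟨hx1, hx2⟩
  ext j
  simp only [Finset.mem_insert, Finset.mem_filter, Finset.mem_univ, true_and]
  constructor
  · rintro ⟨hji, hxj⟩
    by_cases hji' : j = i
    · left; exact hji'
    · right
      have hjlt : j < i := lt_of_le_of_ne hji hji'
      have hxj' : x.1 ∈ dIx a j ∧ x.2 ∈ dIx b j := by rw [hR] at hxj; exact hxj
      have hIsub : dIx a i ⊆ dIx a j := dInt_subset _ _ _ _ (hmono j i hji) hx1 hxj'.1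
      have hJsub : dIx b j ⊆ dIx b i :=
        (L3 hR hmono hsel hjlt (le_refl i) hIsub subset_rfl hxj'.2 hx2).1
      exact ⟨mem_Tset.2 ⟨hjlt, hIsub, hJsub⟩, hxj'.2⟩
  · rintro (rfl | ⟨hjT, hxj⟩)
    · exact ⟨le_refl _, hxR⟩
    · have h' := mem_Tset.1 hjT
      refine ⟨h'.1.le, ?_⟩
      rw [hR]; exact ⟨h'.2.1 hx1, hxj⟩

omit hR hmono hsel in
lemma i_notmem_filter (x : ℝ × ℝ) :
    i ∉ (Tset a b i).filter fun j => x.2 ∈ dIx b j := by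
  intro h
  exact absurd (mem_Tset.1 (Finset.mem_filter.1 h).1).1 (lt_irrefl i)

lemma measure_bound (n : ℕ) :
    volume {x : ℝ × ℝ | x ∈ R i ∧
        n + 2 ≤ (Finset.univ.filter fun j : Fin N => j ≤ i ∧ x ∈ R j).card}
      ≤ 3⁻¹ ^ (n+1) * volume (R i) := by
  have hseteq : {x : ℝ × ℝ | x ∈ R i ∧
        n + 2 ≤ (Finset.univ.filter fun j : Fin N => j ≤ i ∧ x ∈ R j).card}
      = dIx a i ×ˢ (⋃ j ∈ Mset a b i n, dIx b j) := by
    ext x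
    constructor
    · rintro ⟨hxR, hcard⟩
      have hx : x.1 ∈ dIx a i ∧ x.2 ∈ dIx b i := by rw [hR] at hxR; exact hxR
      rw [filter_eq_insert hR hmono hsel x hx.1 hx.2,
        Finset.card_insert_of_notMem (i_notmem_filter x)] at hcard
      obtain ⟨j, hjM, hyj⟩ := cover hR hmono hsel (y := x.2) (n := n) (i := i) (by omega)
      exact ⟨hx.1, Set.mem_iUnion₂.2 ⟨j, hjM, hyj⟩⟩
    · rintro ⟨hx1, hx2⟩
      obtain ⟨j, hjM, hyj⟩ := Set.mem_iUnion₂.1 hx2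
      have hjT := Mset_subset_Tset n hjM
      have hx2i : x.2 ∈ dIx b i := (mem_Tset.1 hjT).2.2 hyj
      refine ⟨by rw [hR]; exact ⟨hx1, hx2i⟩, ?_⟩
      have hlb := depth_lb hR hmono hsel n j hjM x.2 hyj
      rw [filter_eq_insert hR hmono hsel x hx1 hx2i,
        Finset.card_insert_of_notMem (i_notmem_filter x)]
      have hle : (((Tset a b i).filter (fun j' => x.2 ∈ dIx b j')).filter
          (fun j'' => j ≤ j'')).card ≤ ((Tset a b i).filter (fun j' => x.2 ∈ dIx b j')).card :=
        Finset.card_le_card (Finset.filter_subset _ _)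
      omega
  rw [hseteq]
  have hvol : volume (dIx a i ×ˢ (⋃ j ∈ Mset a b i n, dIx b j))
      = volume (dIx a i) * volume (⋃ j ∈ Mset a b i n, dIx b j) := by
    rw [Measure.volume_eq_prod]; exact Measure.prod_prod _ _
  rw [hvol, volume_R hR i]
  calc volume (dIx a i) * volume (⋃ j ∈ Mset a b i n, dIx b j)
      ≤ volume (dIx a i) * (3⁻¹ ^ (n+1) * volume (dIx b i)) :=
        mul_le_mul_right (Ubound hR hmono hsel n) _
    _ = 3⁻¹ ^ (n+1) * (volume (dIx a i) * volume (dIx b i)) := by ring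

end Main3

/-- Integral multiplicity bound: under the hypotheses of the selection of dyadic
rectangles (non-increasing long sides in the `x₁`-direction, overlap with previous
rectangles less than a third of the measure), for every `k ≥ 1`,
`∫_{R_i} (Σ_{j≤i} 𝟙_{R_j})^{k-1} ≤ |R_i| Σ_{n=1}^∞ n^{k-1} 3^{1-n}`
(the series indexed by `n = n'+1`). -/
theorem dyadic_multiplicity_integral_bound (N : ℕ) (a b : Fin N → ℤ × ℤ)
    (R : Fin N → Set (ℝ × ℝ))
    (hR : ∀ i, R i = dInt (a i).1 (a i).2 ×ˢ dInt (b i).1 (b i).2)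
    (hlong : ∀ i, (b i).2 ≤ (a i).2)
    (hmono : ∀ i j : Fin N, i ≤ j → (a j).2 ≤ (a i).2)
    (hsel : ∀ i : Fin N, 0 < (i : ℕ) →
      volume (R i ∩ ⋃ j : {j : Fin N // (j : ℕ) < (i : ℕ)}, R j) < 3⁻¹ * volume (R i)) :
    ∀ (i : Fin N) (k : ℕ), 1 ≤ k →
      (∫⁻ x in R i,
          ((Finset.univ.filter fun j : Fin N => j ≤ i ∧ x ∈ R j).card : ℝ≥0∞) ^ (k - 1)) ≤
        volume (R i) * ∑' n : ℕ, ((n : ℝ≥0∞) + 1) ^ (k - 1) * (3 : ℝ≥0∞) ^ (1 - ((n : ℤ) + 1)) := by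
  intro i k _
  have hR' : ∀ j, R j = dIx a j ×ˢ dIx b j := hR
  set g : ℝ × ℝ → ℕ := fun x => (Finset.univ.filter fun j : Fin N => j ≤ i ∧ x ∈ R j).card
    with hg
  set B : ℕ → Set (ℝ × ℝ) := fun n => {x | x ∈ R i ∧ g x = n + 1} with hB
  have hmg : Measurable g := by
    have hgeq : g = fun x => ∑ j : Fin N, if j ≤ i then (R j).indicator (fun _ => 1) x else 0 := by
      funext x
      show (Finset.univ.filter fun j : Fin N => j ≤ i ∧ x ∈ R j).card = _
      rw [Finset.card_filter]
      refine Finset.sum_congr rfl ?_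
      intro j _
      by_cases h1 : j ≤ i
      · by_cases h2 : x ∈ R j
        · simp [h1, h2]
        · simp [h1, h2]
      · simp [h1]
    rw [hgeq]
    refine Finset.measurable_sum _ ?_
    intro j _
    by_cases h1 : j ≤ i
    · simpa [h1] using
        (measurable_const.indicator (R_meas hR' j) :
          Measurable ((R j).indicator (fun _ => (1:ℕ))))
    · simpa [h1] using (measurable_const : Measurable fun _ : ℝ × ℝ => (0:ℕ))
  have hmB : ∀ n, MeasurableSet (B n) := by
    intro n
    have : B n = R i ∩ g ⁻¹' {n+1} := by
      ext x; exact Iff.rfl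
    rw [this]
    exact (R_meas hR' i).inter (hmg (measurableSet_singleton _))
  have hpt : ∀ x, (R i).indicator (fun x => ((g x : ℝ≥0∞)) ^ (k-1)) x
      ≤ ∑' n : ℕ, Set.indicator (B n) (fun _ => ((n : ℝ≥0∞) + 1) ^ (k-1)) x := by
    intro x
    by_cases hx : x ∈ R i
    · rw [Set.indicator_of_mem hx]
      have hg1 : 1 ≤ g x := by
        refine Finset.card_pos.2 ⟨i, ?_⟩
        exact Finset.mem_filter.2 ⟨Finset.mem_univ _, le_refl _, hx⟩
      have hxB : x ∈ B (g x - 1) := ⟨hx, by omega⟩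
      have heq : Set.indicator (B (g x - 1))
          (fun _ => (((g x - 1 : ℕ) : ℝ≥0∞) + 1) ^ (k-1)) x = (g x : ℝ≥0∞) ^ (k-1) := by
        rw [Set.indicator_of_mem hxB]
        congr 1
        have h1 : ((g x - 1 : ℕ) : ℝ≥0∞) + 1 = (((g x - 1) + 1 : ℕ) : ℝ≥0∞) := by push_cast; ring
        rw [h1]
        congr 1
        omega
      calc (g x : ℝ≥0∞) ^ (k-1) = _ := heq.symm
        _ ≤ ∑' n : ℕ, Set.indicator (B n) (fun _ => ((n : ℝ≥0∞) + 1) ^ (k-1)) x :=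
            ENNReal.le_tsum (g x - 1)
    · rw [Set.indicator_of_notMem hx]
      exact zero_le
  have hTB : ∀ n : ℕ, volume (B n) ≤ 3⁻¹ ^ n * volume (R i) := by
    intro n
    cases n with
    | zero =>
      simpa using measure_mono (fun x (hx : x ∈ B 0) => hx.1)
    | succ n =>
      have hsub : B (n+1) ⊆ {x : ℝ×ℝ | x ∈ R i ∧
          n + 2 ≤ (Finset.univ.filter fun j : Fin N => j ≤ i ∧ x ∈ R j).card} :=
        fun x hx => ⟨hx.1, by
          have h2 := hx.2
          show n + 2 ≤ g x
          omega⟩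
      exact le_trans (measure_mono hsub) (measure_bound hR' hmono hsel n)
  calc ∫⁻ x in R i,
        ((Finset.univ.filter fun j : Fin N => j ≤ i ∧ x ∈ R j).card : ℝ≥0∞) ^ (k - 1)
      = ∫⁻ x, (R i).indicator (fun x => (g x : ℝ≥0∞) ^ (k-1)) x :=
        (lintegral_indicator (R_meas hR' i) _).symm
    _ ≤ ∫⁻ x, ∑' n : ℕ, Set.indicator (B n) (fun _ => ((n : ℝ≥0∞) + 1) ^ (k-1)) x :=
        lintegral_mono hpt
    _ = ∑' n : ℕ, ∫⁻ x, Set.indicator (B n) (fun _ => ((n : ℝ≥0∞) + 1) ^ (k-1)) x :=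
        lintegral_tsum (fun n => (measurable_const.indicator (hmB n)).aemeasurable)
    _ = ∑' n : ℕ, ((n : ℝ≥0∞) + 1) ^ (k-1) * volume (B n) := by
        refine tsum_congr fun n => ?_
        rw [lintegral_indicator (hmB n), setLIntegral_const]
    _ ≤ ∑' n : ℕ, ((n : ℝ≥0∞) + 1) ^ (k-1) * (3⁻¹ ^ n * volume (R i)) :=
        ENNReal.tsum_le_tsum (fun n => mul_le_mul_right (hTB n) _)
    _ = volume (R i) * ∑' n : ℕ, ((n : ℝ≥0∞) + 1) ^ (k - 1) * (3 : ℝ≥0∞) ^ (1 - ((n : ℤ) + 1)) := by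
        rw [← ENNReal.tsum_mul_left]
        refine tsum_congr fun n => ?_
        have h3 : (3 : ℝ≥0∞) ^ ((1:ℤ) - ((n:ℤ)+1)) = 3⁻¹ ^ n := by
          have he : (1:ℤ) - ((n:ℤ)+1) = -(n:ℤ) := by ring
          rw [he, ENNReal.zpow_neg, ← ENNReal.inv_pow]
          norm_num
        rw [h3]
        ring
end
end
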